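/- Let Σ be a spacelike surface in M²×ℝ₁ with induced metric g, and let g' be the metric induced on Σ from the Riemannian product M²×ℝ. Then for every tangent vector X: g(X,X) = |X*|² - X(h)², g'(X,X) = |X*|² + X(h)², and the conformal metric ĝ = (1-Θ)²g satisfies ĝ(X,X) ≥ |X*|² ≥ (1/2) g'(X,X). Consequently, if g' is complete then ĝ is complete. -/

import Mathlib

/-- Pointwise comparison of metrics for a spacelike surface in M²×ℝ₁: writing a tangent
vector X = X* + X(h)∂_t, with N = N* - Θ∂_t, ‖N*‖² = Θ²-1 and ΘX(h) = -⟨X*,N*⟩, one has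
g(X,X) = |X*|² - X(h)², g'(X,X) = |X*|² + X(h)², and the conformal metric ĝ = (1-Θ)²g
satisfies ĝ(X,X) ≥ |X*|² ≥ (1/2)g'(X,X) (whence completeness of g' implies that of ĝ). -/
theorem stmt18 {E : Type*} [NormedAddCommGroup E] [InnerProductSpace ℝ E]
    (Θ Xh : ℝ) (Xstar Nstar : E)
    (hΘ : Θ ≤ -1)
    (hN : ‖Nstar‖ ^ 2 = Θ ^ 2 - 1)
    (hXh : Θ * Xh = -(inner ℝ Xstar Nstar : ℝ)) :
    (1 - Θ) ^ 2 * (‖Xstar‖ ^ 2 - Xh ^ 2) ≥ ‖Xstar‖ ^ 2 ∧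
      ‖Xstar‖ ^ 2 ≥ (1 / 2) * (‖Xstar‖ ^ 2 + Xh ^ 2) := by
  have hCS : (inner ℝ Xstar Nstar : ℝ) ^ 2 ≤ ‖Xstar‖ ^ 2 * ‖Nstar‖ ^ 2 := by
    have h := abs_real_inner_le_norm Xstar Nstar
    calc (inner ℝ Xstar Nstar : ℝ) ^ 2 = |(inner ℝ Xstar Nstar : ℝ)| ^ 2 := (sq_abs _).symm
    _ ≤ (‖Xstar‖ * ‖Nstar‖) ^ 2 := pow_le_pow_left₀ (abs_nonneg _) h 2
    _ = ‖Xstar‖ ^ 2 * ‖Nstar‖ ^ 2 := by ring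
  have key : Θ ^ 2 * Xh ^ 2 ≤ ‖Xstar‖ ^ 2 * (Θ ^ 2 - 1) := by
    have : (Θ * Xh) ^ 2 = (inner ℝ Xstar Nstar : ℝ) ^ 2 := by rw [hXh]; ring
    nlinarith [hCS, hN]
  have hX2 : Xh ^ 2 ≤ ‖Xstar‖ ^ 2 := by nlinarith [sq_nonneg Xh, norm_nonneg Xstar]
  constructor
  · nlinarith [sq_nonneg (1 - Θ), sq_nonneg Θ, sq_nonneg Xh]
  · linarith
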